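/- If ℓ and k are distinct lines in ℍ^n at angle π/3 to one another, then the image r_ℓ(k) of k under the reflection of order 2 in ℓ is a line contained in the two-dimensional ℍ-subspace spanned by ℓ and k, it is at angle π/3 to both ℓ and k, and it is the unique line in that subspace with this property. -/

import Mathlib

noncomputable section

local notation "ℍ" => Quaternion ℝ

/-- The standard Hermitian form on `ℍⁿ`, conjugate-linear in the first variable and
ℍ-linear in the second: `⟨x,y⟩ = ∑ i, star (x i) * y i`. -/
def qInner {n : ℕ} (x y : Fin n → ℍ) : ℍ := ∑ i, star (x i) * y i

/-- The norm `|v| = √⟨v,v⟩` on `ℍⁿ`. -/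
def qNorm {n : ℕ} (v : Fin n → ℍ) : ℝ := Real.sqrt (qInner v v).re

/-- The ℍ-line `vℍ` spanned by `v` (the set of right scalar multiples of `v`). -/
def lineOf {n : ℕ} (v : Fin n → ℍ) : Set (Fin n → ℍ) := {w | ∃ c : ℍ, w = fun i => v i * c}

/-- `ℓ` and `ℓ'` are at angle `θ ∈ [0, π/2]`: for all nonzero `v ∈ ℓ`, `w ∈ ℓ'`,
`|⟨v,w⟩| = cos θ · |v|·|w|`. -/
def atAngle {n : ℕ} (ℓ ℓ' : Set (Fin n → ℍ)) (θ : ℝ) : Prop :=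
  ∀ v ∈ ℓ, ∀ w ∈ ℓ', v ≠ 0 → w ≠ 0 → ‖qInner v w‖ = Real.cos θ * (qNorm v * qNorm w)

/-- The two-dimensional right ℍ-subspace spanned by `v` and `w`, as a set. -/
def planeOf {n : ℕ} (v w : Fin n → ℍ) : Set (Fin n → ℍ) :=
  {x | ∃ c d : ℍ, x = (fun i => v i * c) + fun i => w i * d}

/-- The reflection of order 2 in the line `αℍ`: `r(v) = v − α·(2/⟨α,α⟩)·⟨α,v⟩`. -/
def reflectIn {n : ℕ} (α : Fin n → ℍ) (v : Fin n → ℍ) : Fin n → ℍ :=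
  fun i => v i - α i * ((2 / qInner α α) * qInner α v)

section Helpers

variable {n : ℕ}

lemma qInner_smul_right (v w : Fin n → ℍ) (c : ℍ) :
    qInner v (fun i => w i * c) = qInner v w * c := by
  simp [qInner, Finset.sum_mul, mul_assoc]

lemma qInner_smul_left (v w : Fin n → ℍ) (c : ℍ) :
    qInner (fun i => v i * c) w = star c * qInner v w := by
  simp [qInner, Finset.mul_sum, star_mul, mul_assoc]

lemma star_qInner (v w : Fin n → ℍ) : star (qInner v w) = qInner w v := by
  simp [qInner, star_sum, star_mul]

lemma qInner_addsmul_left (v w x : Fin n → ℍ) (c d : ℍ) :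
    qInner ((fun i => v i * c) + fun i => w i * d) x
      = star c * qInner v x + star d * qInner w x := by
  simp [qInner, Pi.add_apply, add_mul, star_mul, mul_assoc, Finset.sum_add_distrib,
    Finset.mul_sum]

lemma qInner_addsmul_right (x v w : Fin n → ℍ) (c d : ℍ) :
    qInner x ((fun i => v i * c) + fun i => w i * d)
      = qInner x v * c + qInner x w * d := by
  simp [qInner, Pi.add_apply, mul_add, Finset.sum_add_distrib, Finset.sum_mul, mul_assoc]

lemma qInner_sub_smul_left (w v x : Fin n → ℍ) (s : ℍ) :
    qInner (fun i => w i - v i * s) x = qInner w x - star s * qInner v x := by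
  simp [qInner, sub_mul, star_mul, mul_assoc, Finset.sum_sub_distrib, Finset.mul_sum]

lemma qInner_sub_smul_right (x w v : Fin n → ℍ) (s : ℍ) :
    qInner x (fun i => w i - v i * s) = qInner x w - qInner x v * s := by
  simp [qInner, mul_sub, Finset.sum_sub_distrib, Finset.sum_mul, mul_assoc]

lemma qInner_self_coe (v : Fin n → ℍ) :
    qInner v v = (((qInner v v).re : ℝ) : ℍ) ∧ (qInner v v).re = ∑ i, Quaternion.normSq (v i) := by
  have h1 : qInner v v = ((∑ i, Quaternion.normSq (v i) : ℝ) : ℍ) := by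
    rw [qInner]
    rw [← Quaternion.algebraMap_def, map_sum]
    exact Finset.sum_congr rfl fun i _ => by rw [Quaternion.star_mul_self, Quaternion.algebraMap_def]
  constructor
  · rw [h1]; simp [Quaternion.re_coe]
  · rw [h1]; simp [Quaternion.re_coe]

lemma qInner_self_re_nonneg (v : Fin n → ℍ) : 0 ≤ (qInner v v).re := by
  rw [(qInner_self_coe v).2]
  exact Finset.sum_nonneg fun i _ => Quaternion.normSq_nonneg

lemma qInner_self_re_pos (v : Fin n → ℍ) (hv : v ≠ 0) : 0 < (qInner v v).re := by
  rcases (qInner_self_re_nonneg v).lt_or_eq with hlt | heq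
  · exact hlt
  · exfalso; apply hv
    have h2 := (qInner_self_coe v).2
    rw [← heq] at h2
    funext i
    have := (Finset.sum_eq_zero_iff_of_nonneg
      (fun i _ => Quaternion.normSq_nonneg)).mp h2.symm i (Finset.mem_univ i)
    exact Quaternion.normSq_eq_zero.mp this

lemma smul_ne_zero_vec {v : Fin n → ℍ} {c : ℍ} (h : (fun i => v i * c) ≠ 0) : c ≠ 0 := by
  rintro rfl; exact h (funext fun i => mul_zero _)

lemma qNorm_smul (v : Fin n → ℍ) (c : ℍ) :
    qNorm (fun i => v i * c) = qNorm v * ‖c‖ := by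
  have h1 : qInner (fun i => v i * c) (fun i => v i * c) = star c * (qInner v v * c) := by
    rw [qInner_smul_left, qInner_smul_right]
  have h2 : (qInner (fun i => v i * c) (fun i => v i * c)).re
      = (qInner v v).re * Quaternion.normSq c := by
    rw [h1, (qInner_self_coe v).1, ← mul_assoc, ← Quaternion.coe_commutes, mul_assoc,
      Quaternion.star_mul_self, ← Quaternion.coe_mul, Quaternion.re_coe, Quaternion.re_coe]
  rw [qNorm, qNorm, h2, Real.sqrt_mul (qInner_self_re_nonneg v),
    Quaternion.normSq_eq_norm_mul_self, Real.sqrt_mul_self (norm_nonneg c)]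

lemma mem_lineOf_self (v : Fin n → ℍ) : v ∈ lineOf v :=
  ⟨1, funext fun i => (mul_one _).symm⟩

lemma lineOf_smul (v : Fin n → ℍ) {c : ℍ} (hc : c ≠ 0) :
    lineOf (fun i => v i * c) = lineOf v := by
  ext x
  constructor
  · rintro ⟨d, rfl⟩; exact ⟨c * d, funext fun i => by simp [mul_assoc]⟩
  · rintro ⟨d, rfl⟩
    exact ⟨c⁻¹ * d, funext fun i => by rw [mul_assoc, ← mul_assoc c, mul_inv_cancel₀ hc, one_mul]⟩

lemma atAngle_lineOf {u v : Fin n → ℍ} {θ : ℝ}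
    (h : ‖qInner u v‖ = Real.cos θ * (qNorm u * qNorm v)) :
    atAngle (lineOf u) (lineOf v) θ := by
  rintro x ⟨c, rfl⟩ y ⟨d, rfl⟩ hx hy
  rw [qInner_smul_left, qInner_smul_right, qNorm_smul, qNorm_smul,
    norm_mul, norm_mul, Quaternion.norm_star, h]
  ring

end Helpers

set_option maxHeartbeats 1600000 in
/-- If `ℓ = vℍ` and `k = wℍ` are distinct lines at angle `π/3`, then `r_ℓ(k)` is a line
contained in the two-dimensional subspace spanned by `ℓ` and `k`, at angle `π/3` to both,
and it is the unique line in that subspace with this property. -/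
theorem reflection_image_is_unique_third_line (n : ℕ) (v w : Fin n → ℍ)
    (hv : v ≠ 0) (hw : w ≠ 0) (hne : lineOf v ≠ lineOf w)
    (h : atAngle (lineOf v) (lineOf w) (Real.pi / 3)) :
    (∃ u : Fin n → ℍ, u ≠ 0 ∧ reflectIn v '' lineOf w = lineOf u) ∧
    reflectIn v '' lineOf w ⊆ planeOf v w ∧
    atAngle (reflectIn v '' lineOf w) (lineOf v) (Real.pi / 3) ∧
    atAngle (reflectIn v '' lineOf w) (lineOf w) (Real.pi / 3) ∧
    (∀ m : Set (Fin n → ℍ), (∃ u : Fin n → ℍ, u ≠ 0 ∧ m = lineOf u) →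
      m ⊆ planeOf v w → atAngle m (lineOf v) (Real.pi / 3) →
      atAngle m (lineOf w) (Real.pi / 3) → m = reflectIn v '' lineOf w) := by
  have cos3 : Real.cos (Real.pi / 3) = 1 / 2 := Real.cos_pi_div_three
  set A : ℝ := (qInner v v).re with hAdef
  set B : ℝ := (qInner w w).re with hBdef
  have hA0 : 0 < A := qInner_self_re_pos v hv
  have hB0 : 0 < B := qInner_self_re_pos w hw
  have hvvA : qInner v v = ((A : ℝ) : ℍ) := (qInner_self_coe v).1
  have hwwB : qInner w w = ((B : ℝ) : ℍ) := (qInner_self_coe w).1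
  set γ : ℍ := qInner v w with hγdef
  have hqnv : qNorm v = Real.sqrt A := rfl
  have hqnw : qNorm w = Real.sqrt B := rfl
  have hγnorm : ‖γ‖ = 1 / 2 * (Real.sqrt A * Real.sqrt B) := by
    have hh := h v (mem_lineOf_self v) w (mem_lineOf_self w) hv hw
    rw [cos3, hqnv, hqnw] at hh
    exact hh
  have hnγ : Quaternion.normSq γ = A * B / 4 := by
    rw [Quaternion.normSq_eq_norm_mul_self, hγnorm]
    nlinarith [Real.sq_sqrt hA0.le, Real.sq_sqrt hB0.le]
  set t : ℝ := 2 / A with htdef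
  set s : ℍ := ((t : ℝ) : ℍ) * γ with hsdef
  have htA : t * A = 2 := by rw [htdef]; field_simp
  have hnγc : γ.re ^ 2 + γ.imI ^ 2 + γ.imJ ^ 2 + γ.imK ^ 2 = A * B / 4 := by
    rw [← Quaternion.normSq_def']; exact hnγ
  have hcoe : (2 / qInner v v : ℍ) = ((t : ℝ) : ℍ) := by
    rw [hvvA, htdef, Quaternion.coe_div, show ((2 : ℝ) : ℍ) = 2 by norm_cast]
  -- the reflected vector
  set u : Fin n → ℍ := fun i => w i - v i * s with hudef
  have hrw : reflectIn v w = u := by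
    funext i
    rw [reflectIn, hudef, hcoe, ← hγdef, ← hsdef]
  have himg : reflectIn v '' lineOf w = lineOf u := by
    ext x
    constructor
    · rintro ⟨y, ⟨c, rfl⟩, rfl⟩
      refine ⟨c, funext fun i => ?_⟩
      show w i * c - v i * ((2 / qInner v v) * qInner v fun j => w j * c) = (w i - v i * s) * c
      rw [qInner_smul_right, hcoe, ← hγdef]
      simp only [hsdef, sub_mul, mul_assoc]
    · rintro ⟨c, rfl⟩
      refine ⟨fun i => w i * c, ⟨c, rfl⟩, funext fun i => ?_⟩
      show w i * c - v i * ((2 / qInner v v) * qInner v fun j => w j * c) = (w i - v i * s) * c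
      rw [qInner_smul_right, hcoe, ← hγdef]
      simp only [hsdef, sub_mul, mul_assoc]
  -- key quaternion identities
  have hwv : qInner w v = star γ := by rw [← star_qInner, hγdef]
  have huv : qInner u v = -star γ := by
    rw [hudef, qInner_sub_smul_left, hwv, hvvA, hsdef, star_mul, Quaternion.star_coe]
    apply Quaternion.ext <;>
      simp only [Quaternion.re_mul, Quaternion.imI_mul, Quaternion.imJ_mul, Quaternion.imK_mul,
        Quaternion.re_add, Quaternion.imI_add, Quaternion.imJ_add, Quaternion.imK_add,
        Quaternion.re_sub, Quaternion.imI_sub, Quaternion.imJ_sub, Quaternion.imK_sub,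
        Quaternion.re_neg, Quaternion.imI_neg, Quaternion.imJ_neg, Quaternion.imK_neg,
        Quaternion.re_star, Quaternion.imI_star, Quaternion.imJ_star, Quaternion.imK_star,
        Quaternion.re_coe, Quaternion.imI_coe, Quaternion.imJ_coe, Quaternion.imK_coe]
    · linear_combination (-γ.re) * htA
    · linear_combination γ.imI * htA
    · linear_combination γ.imJ * htA
    · linear_combination γ.imK * htA
  have huw : qInner u w = ((B / 2 : ℝ) : ℍ) := by
    rw [hudef, qInner_sub_smul_left, hwwB, ← hγdef, hsdef, star_mul, Quaternion.star_coe]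
    apply Quaternion.ext <;>
      simp only [Quaternion.re_mul, Quaternion.imI_mul, Quaternion.imJ_mul, Quaternion.imK_mul,
        Quaternion.re_add, Quaternion.imI_add, Quaternion.imJ_add, Quaternion.imK_add,
        Quaternion.re_sub, Quaternion.imI_sub, Quaternion.imJ_sub, Quaternion.imK_sub,
        Quaternion.re_neg, Quaternion.imI_neg, Quaternion.imJ_neg, Quaternion.imK_neg,
        Quaternion.re_star, Quaternion.imI_star, Quaternion.imJ_star, Quaternion.imK_star,
        Quaternion.re_coe, Quaternion.imI_coe, Quaternion.imJ_coe, Quaternion.imK_coe]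
    · linear_combination (-t) * hnγc + (-(B / 4)) * htA
    · ring
    · ring
    · ring
  have huu : qInner u u = ((B : ℝ) : ℍ) := by
    rw [hudef, qInner_sub_smul_left, qInner_sub_smul_right, qInner_sub_smul_right,
      hwv, hvvA, hwwB, ← hγdef, hsdef, star_mul, Quaternion.star_coe]
    apply Quaternion.ext <;>
      simp only [Quaternion.re_mul, Quaternion.imI_mul, Quaternion.imJ_mul, Quaternion.imK_mul,
        Quaternion.re_add, Quaternion.imI_add, Quaternion.imJ_add, Quaternion.imK_add,
        Quaternion.re_sub, Quaternion.imI_sub, Quaternion.imJ_sub, Quaternion.imK_sub,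
        Quaternion.re_neg, Quaternion.imI_neg, Quaternion.imJ_neg, Quaternion.imK_neg,
        Quaternion.re_star, Quaternion.imI_star, Quaternion.imJ_star, Quaternion.imK_star,
        Quaternion.re_coe, Quaternion.imI_coe, Quaternion.imJ_coe, Quaternion.imK_coe]
    · linear_combination (t ^ 2 * A - 2 * t) * hnγc + (A * B / 4 * t) * htA
    · ring
    · ring
    · ring
  have hqnu : qNorm u = Real.sqrt B := by rw [qNorm, huu, Quaternion.re_coe]
  have hu0 : u ≠ 0 := by
    intro h0
    have hw' : w = fun i => v i * s := by
      funext i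
      have := congrFun h0 i
      rw [hudef] at this
      simpa [sub_eq_zero] using this
    have hs0 : s ≠ 0 := by
      intro hs
      apply hw
      rw [hw', hs]
      funext i; simp
    exact hne (by rw [hw', lineOf_smul v hs0])
  refine ⟨⟨u, hu0, himg⟩, ?_, ?_, ?_, ?_⟩
  · rw [himg]
    rintro x ⟨c, rfl⟩
    refine ⟨-(s * c), c, funext fun i => ?_⟩
    show (w i - v i * s) * c = v i * -(s * c) + w i * c
    rw [sub_mul, mul_assoc, mul_neg]
    abel
  · rw [himg]
    apply atAngle_lineOf
    rw [huv, norm_neg, Quaternion.norm_star, hγnorm, cos3, hqnu, hqnv]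
    ring
  · rw [himg]
    apply atAngle_lineOf
    rw [huw, cos3, hqnu, hqnw, Quaternion.norm_coe]
    rw [Real.norm_eq_abs, abs_of_pos (by linarith : (0 : ℝ) < B / 2),
      Real.mul_self_sqrt hB0.le]
    ring
  · rintro m ⟨u', hu'0, rfl⟩ hsub h1 h2
    obtain ⟨c, d, hu'⟩ := hsub (mem_lineOf_self u')
    set nc : ℝ := Quaternion.normSq c with hncdef
    set nd : ℝ := Quaternion.normSq d with hnddef
    set R : ℝ := (star c * γ * d).re with hRdef
    -- inner products with u'
    have hq1 : qInner u' v = star c * ((A : ℝ) : ℍ) + star d * star γ := by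
      rw [hu', qInner_addsmul_left, hvvA, hwv]
    have hq2 : qInner u' w = star c * γ + star d * ((B : ℝ) : ℍ) := by
      rw [hu', qInner_addsmul_left, hwwB, ← hγdef]
    have hq3 : qInner u' u' = star c * (((A : ℝ) : ℍ) * c + γ * d)
        + star d * (star γ * c + ((B : ℝ) : ℍ) * d) := by
      rw [hu', qInner_addsmul_left, qInner_addsmul_right, qInner_addsmul_right,
        hvvA, hwwB, hwv, ← hγdef]
    have hNval : (qInner u' u').re = A * nc + B * nd + 2 * R := by
      rw [hq3, hRdef, hncdef, hnddef, Quaternion.normSq_def', Quaternion.normSq_def']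
      simp only [Quaternion.re_mul, Quaternion.imI_mul, Quaternion.imJ_mul, Quaternion.imK_mul,
        Quaternion.re_add, Quaternion.imI_add, Quaternion.imJ_add, Quaternion.imK_add,
        Quaternion.re_star, Quaternion.imI_star, Quaternion.imJ_star, Quaternion.imK_star,
        Quaternion.re_coe, Quaternion.imI_coe, Quaternion.imJ_coe, Quaternion.imK_coe]
      ring
    have hXval : Quaternion.normSq (qInner u' v)
        = A ^ 2 * nc + Quaternion.normSq γ * nd + 2 * A * R := by
      rw [hq1, hRdef, hncdef, hnddef, Quaternion.normSq_def', Quaternion.normSq_def',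
        Quaternion.normSq_def', Quaternion.normSq_def']
      simp only [Quaternion.re_mul, Quaternion.imI_mul, Quaternion.imJ_mul, Quaternion.imK_mul,
        Quaternion.re_add, Quaternion.imI_add, Quaternion.imJ_add, Quaternion.imK_add,
        Quaternion.re_star, Quaternion.imI_star, Quaternion.imJ_star, Quaternion.imK_star,
        Quaternion.re_coe, Quaternion.imI_coe, Quaternion.imJ_coe, Quaternion.imK_coe]
      ring
    have hYval : Quaternion.normSq (qInner u' w)
        = Quaternion.normSq γ * nc + B ^ 2 * nd + 2 * B * R := by
      rw [hq2, hRdef, hncdef, hnddef, Quaternion.normSq_def', Quaternion.normSq_def',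
        Quaternion.normSq_def', Quaternion.normSq_def']
      simp only [Quaternion.re_mul, Quaternion.imI_mul, Quaternion.imJ_mul, Quaternion.imK_mul,
        Quaternion.re_add, Quaternion.imI_add, Quaternion.imJ_add, Quaternion.imK_add,
        Quaternion.re_star, Quaternion.imI_star, Quaternion.imJ_star, Quaternion.imK_star,
        Quaternion.re_coe, Quaternion.imI_coe, Quaternion.imJ_coe, Quaternion.imK_coe]
      ring
    have hNnn : 0 ≤ (qInner u' u').re := qInner_self_re_nonneg u'
    have e1 : Quaternion.normSq (qInner u' v) = 1 / 4 * ((qInner u' u').re * A) := by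
      have hh := h1 u' (mem_lineOf_self u') v (mem_lineOf_self v) hu'0 hv
      rw [cos3, hqnv] at hh
      simp only [qNorm] at hh
      rw [Quaternion.normSq_eq_norm_mul_self, hh]
      have s1 := Real.mul_self_sqrt hNnn
      have s2 := Real.mul_self_sqrt hA0.le
      nlinarith [s1, s2]
    have e2 : Quaternion.normSq (qInner u' w) = 1 / 4 * ((qInner u' u').re * B) := by
      have hh := h2 u' (mem_lineOf_self u') w (mem_lineOf_self w) hu'0 hw
      rw [cos3, hqnw] at hh
      simp only [qNorm] at hh
      rw [Quaternion.normSq_eq_norm_mul_self, hh]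
      have s1 := Real.mul_self_sqrt hNnn
      have s2 := Real.mul_self_sqrt hB0.le
      nlinarith [s1, s2]
    rw [hXval, hNval, hnγ] at e1
    rw [hYval, hNval, hnγ] at e2
    have hR1 : 2 * R = -(A * nc) := by
      have hz : A * (A * nc + 2 * R) = 0 := by linear_combination (4 / 3) * e1
      rcases mul_eq_zero.mp hz with h' | h'
      · exact absurd h' (ne_of_gt hA0)
      · linarith
    have hR2 : 2 * R = -(B * nd) := by
      have hz : B * (B * nd + 2 * R) = 0 := by linear_combination (4 / 3) * e2
      rcases mul_eq_zero.mp hz with h' | h'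
      · exact absurd h' (ne_of_gt hB0)
      · linarith
    have hncnn : 0 ≤ nc := Quaternion.normSq_nonneg
    have hndnn : 0 ≤ nd := Quaternion.normSq_nonneg
    have hc0 : c ≠ 0 := by
      intro hc
      have hnc0 : nc = 0 := by rw [hncdef, hc]; simp
      have hR0 : R = 0 := by rw [hnc0] at hR1; linarith
      have hnd0 : nd = 0 := by
        rw [hR0] at hR2
        have := hR2.symm
        nlinarith
      have hd : d = 0 := Quaternion.normSq_eq_zero.mp hnd0
      apply hu'0
      rw [hu', hc, hd]
      funext i; simp
    have hd0 : d ≠ 0 := by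
      intro hd
      have hnd0 : nd = 0 := by rw [hnddef, hd]; simp
      have hR0 : R = 0 := by rw [hnd0] at hR2; linarith
      have hnc0 : nc = 0 := by
        rw [hR0] at hR1
        nlinarith
      have hc : c = 0 := Quaternion.normSq_eq_zero.mp hnc0
      apply hu'0
      rw [hu', hc, hd]
      funext i; simp
    -- the triple product is real
    have hsq : R ^ 2 = Quaternion.normSq (star c * γ * d) := by
      rw [map_mul Quaternion.normSq, map_mul Quaternion.normSq, Quaternion.normSq_star, ← hncdef, ← hnddef, hnγ]
      have h4 : (2 * R) * (2 * R) = -(A * nc) * -(B * nd) := by rw [← hR1, ← hR2]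
      linear_combination (1 / 4) * h4
    have hq : star c * γ * d = ((R : ℝ) : ℍ) := by
      rw [Quaternion.normSq_def'] at hsq
      have hre : (star c * γ * d).re = R := hRdef.symm
      rw [hre] at hsq
      have him : (star c * γ * d).imI ^ 2 + (star c * γ * d).imJ ^ 2
          + (star c * γ * d).imK ^ 2 = 0 := by linarith
      have hI : (star c * γ * d).imI = 0 := by
        have h0 : (star c * γ * d).imI ^ 2 = 0 := by
          linarith [sq_nonneg (star c * γ * d).imI, sq_nonneg (star c * γ * d).imJ,
            sq_nonneg (star c * γ * d).imK]
        exact pow_eq_zero_iff (two_ne_zero) |>.mp h0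
      have hJ : (star c * γ * d).imJ = 0 := by
        have h0 : (star c * γ * d).imJ ^ 2 = 0 := by
          linarith [sq_nonneg (star c * γ * d).imI, sq_nonneg (star c * γ * d).imJ,
            sq_nonneg (star c * γ * d).imK]
        exact pow_eq_zero_iff (two_ne_zero) |>.mp h0
      have hK : (star c * γ * d).imK = 0 := by
        have h0 : (star c * γ * d).imK ^ 2 = 0 := by
          linarith [sq_nonneg (star c * γ * d).imI, sq_nonneg (star c * γ * d).imJ,
            sq_nonneg (star c * γ * d).imK]
        exact pow_eq_zero_iff (two_ne_zero) |>.mp h0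
      apply Quaternion.ext <;>
        simp [hre, hI, hJ, hK, Quaternion.re_coe, Quaternion.imI_coe, Quaternion.imJ_coe,
          Quaternion.imK_coe]
    have hsd : s * d = -c := by
      have hkey : star c * (s * d) = star c * (-c) := by
        rw [hsdef, mul_assoc ((t : ℝ) : ℍ) γ d, ← mul_assoc (star c), ← Quaternion.coe_commutes,
          mul_assoc, ← mul_assoc (star c) γ d, hq, ← Quaternion.coe_mul]
        rw [show t * R = -nc by rw [htdef]; field_simp; linarith [hR1]]
        rw [mul_neg, Quaternion.star_mul_self, ← hncdef, Quaternion.coe_neg]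
      exact mul_left_cancel₀ (star_ne_zero.mpr hc0) hkey
    have hu'd : u' = fun i => u i * d := by
      funext i
      rw [hu', hudef]
      show v i * c + w i * d = (w i - v i * s) * d
      rw [sub_mul, mul_assoc, hsd, mul_neg, sub_neg_eq_add]
      abel
    rw [himg, hu'd, lineOf_smul u hd0]
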